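/- Let N, r ≥ 1 be integers, let C ∈ ℤ^{N×r} be an integer matrix each of whose columns sums to zero (∑_{i=1}^N C_{ij} = 0 for every j), and let a ∈ ℂ^N. Then there exists ε > 0 such that for every x ∈ ℂ^r with |x_j| < ε for all j, the family indexed by λ ∈ ℕ^r of terms (∏_{j=1}^r x_j^{λ_j}) · ∏_{i=1}^N (Γ(a_i + ∑_{j=1}^r C_{ij} λ_j))^{−1} is absolutely summable, where the reciprocal of Γ is taken to be 0 at the poles of Γ. -/
import Mathlib

open Complex Finset Nat


private lemma my_choose_le_two_pow (n k : ℕ) : n.choose k ≤ 2 ^ n := by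
  rcases le_or_gt k n with h | h
  · calc n.choose k ≤ ∑ m ∈ range (n + 1), n.choose m :=
        Finset.single_le_sum (fun i _ => Nat.zero_le _) (mem_range.mpr (Nat.lt_succ_of_le h))
    _ = 2 ^ n := Nat.sum_range_choose n
  · simp [Nat.choose_eq_zero_of_lt h]

private lemma my_factorial_sum_le {ι : Type*} [DecidableEq ι] (s : Finset ι) (m : ι → ℕ) :
    (∑ i ∈ s, m i)! ≤ 2 ^ (s.card * ∑ i ∈ s, m i) * ∏ i ∈ s, (m i)! := by
  induction s using Finset.induction with
  | empty => simp
  | @insert a s ha ih =>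
    rw [sum_insert ha, prod_insert ha, card_insert_of_notMem ha]
    set S := ∑ i ∈ s, m i with hS
    have h1 : (m a + S)! = (m a + S).choose (m a) * (m a)! * S ! := by
      have := Nat.choose_mul_factorial_mul_factorial (Nat.le_add_right (m a) S)
      simpa using this.symm
    calc (m a + S)! = (m a + S).choose (m a) * (m a)! * S ! := h1
      _ ≤ 2 ^ (m a + S) * (m a)! * S ! := by
          gcongr; exact my_choose_le_two_pow _ _
      _ ≤ 2 ^ (m a + S) * (m a)! * (2 ^ (s.card * S) * ∏ i ∈ s, (m i)!) := by
          gcongr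
      _ = 2 ^ (m a + S + s.card * S) * ((m a)! * ∏ i ∈ s, (m i)!) := by ring
      _ ≤ 2 ^ ((s.card + 1) * (m a + S)) * ((m a)! * ∏ i ∈ s, (m i)!) := by
          gcongr 2 ^ ?_ * _
          · exact one_le_two
          · nlinarith [Nat.zero_le (m a), Nat.zero_le S]

private lemma my_prod_factorial_le {ι : Type*} [DecidableEq ι] (s : Finset ι) (m : ι → ℕ) :
    ∏ i ∈ s, (m i)! ≤ (∑ i ∈ s, m i)! := by
  induction s using Finset.induction with
  | empty => simp
  | @insert a s ha ih =>
    rw [sum_insert ha, prod_insert ha]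
    calc (m a)! * ∏ i ∈ s, (m i)! ≤ (m a)! * (∑ i ∈ s, m i)! := by gcongr
      _ ≤ (m a + ∑ i ∈ s, m i)! :=
        Nat.le_of_dvd (Nat.factorial_pos _) (Nat.factorial_mul_factorial_dvd_factorial_add _ _)

private lemma inv_gamma_rec (z : ℂ) :
    (Complex.Gamma z)⁻¹ = z * (Complex.Gamma (z + 1))⁻¹ := by
  by_cases hz : z = 0
  · simp [hz, Complex.Gamma_zero]
  · rw [Complex.Gamma_add_one z hz, mul_inv, ← mul_assoc, mul_inv_cancel₀ hz, one_mul]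

private lemma inv_gamma_down (a : ℂ) (n : ℕ) :
    ‖(Complex.Gamma (a - n))⁻¹‖ ≤ ‖(Complex.Gamma a)⁻¹‖ * ((1 + ‖a‖) ^ n * n !) := by
  induction n with
  | zero => simp
  | succ n ih =>
    have h := inv_gamma_rec (a - (n + 1 : ℕ))
    have e : (a - (n + 1 : ℕ)) + 1 = a - n := by push_cast; ring
    rw [e] at h
    rw [h, norm_mul]
    have h1 : ‖a - ((n : ℕ) + 1 : ℕ)‖ ≤ (1 + ‖a‖) * (n + 1) := by
      calc ‖a - ((n : ℕ) + 1 : ℕ)‖ ≤ ‖a‖ + ‖(((n : ℕ) + 1 : ℕ) : ℂ)‖ := norm_sub_le _ _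
        _ = ‖a‖ + (n + 1) := by rw [Complex.norm_natCast]; push_cast; ring
        _ ≤ (1 + ‖a‖) * (n + 1) := by nlinarith [norm_nonneg a]
    calc ‖a - ((n : ℕ) + 1 : ℕ)‖ * ‖(Complex.Gamma (a - n))⁻¹‖
        ≤ ((1 + ‖a‖) * (n + 1)) * (‖(Complex.Gamma a)⁻¹‖ * ((1 + ‖a‖) ^ n * n !)) := by
          apply mul_le_mul h1 ih (norm_nonneg _) (by positivity)
      _ = ‖(Complex.Gamma a)⁻¹‖ * ((1 + ‖a‖) ^ (n + 1) * (n + 1)!) := by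
          push_cast [Nat.factorial_succ]; ring

private lemma inv_gamma_up_aux (a : ℂ) (n0 : ℕ) (h : ‖a‖ + 1 ≤ n0) (p : ℕ) :
    ‖(Complex.Gamma (a + n0 + p))⁻¹‖ * p ! ≤ ‖(Complex.Gamma (a + n0))⁻¹‖ := by
  induction p with
  | zero => simp
  | succ p ih =>
    have h2 : (p : ℝ) + 1 ≤ ‖a + n0 + p‖ := by
      have h3 : ‖((n0 : ℂ) + p)‖ - ‖-a‖ ≤ ‖((n0 : ℂ) + p) - (-a)‖ := norm_sub_norm_le _ _
      have h4 : ‖((n0 : ℂ) + p)‖ = (n0 : ℝ) + p := by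
        rw [show ((n0 : ℂ) + p) = ((n0 + p : ℕ) : ℂ) by push_cast; ring, Complex.norm_natCast]
        push_cast; ring
      have h5 : ((n0 : ℂ) + p) - (-a) = a + n0 + p := by ring
      rw [h4, h5, norm_neg] at h3
      have : (p : ℝ) + 1 ≤ (n0 : ℝ) + p - ‖a‖ := by linarith
      linarith
    have hrec := inv_gamma_rec (a + n0 + p)
    have e : a + n0 + p + 1 = a + n0 + ((p + 1 : ℕ) : ℂ) := by push_cast; ring
    rw [e] at hrec
    have hn : ‖(Complex.Gamma (a + n0 + p))⁻¹‖
        = ‖a + n0 + p‖ * ‖(Complex.Gamma (a + n0 + ((p + 1 : ℕ) : ℂ)))⁻¹‖ := by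
      rw [hrec, norm_mul]
    have key : ((p : ℝ) + 1) * ‖(Complex.Gamma (a + n0 + ((p + 1 : ℕ) : ℂ)))⁻¹‖
        ≤ ‖(Complex.Gamma (a + n0 + p))⁻¹‖ := by
      rw [hn]; exact mul_le_mul_of_nonneg_right h2 (norm_nonneg _)
    calc ‖(Complex.Gamma (a + n0 + ((p + 1 : ℕ) : ℂ)))⁻¹‖ * (p + 1)!
        = (((p : ℝ) + 1) * ‖(Complex.Gamma (a + n0 + ((p + 1 : ℕ) : ℂ)))⁻¹‖) * p ! := by
          push_cast [Nat.factorial_succ]; ring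
      _ ≤ ‖(Complex.Gamma (a + n0 + p))⁻¹‖ * p ! := by
          exact mul_le_mul_of_nonneg_right key (by positivity)
      _ ≤ ‖(Complex.Gamma (a + n0))⁻¹‖ := ih

private lemma inv_gamma_up (a : ℂ) : ∃ K : ℝ, 0 ≤ K ∧
    ∀ n : ℕ, ‖(Complex.Gamma (a + n))⁻¹‖ * n ! ≤ K * 2 ^ n := by
  set n0 : ℕ := ⌈‖a‖⌉₊ + 1 with hn0def
  have hn0 : ‖a‖ + 1 ≤ n0 := by
    have := Nat.le_ceil ‖a‖
    push_cast [hn0def]; linarith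
  set K : ℝ := ∑ k ∈ range (n0 + 1), ‖(Complex.Gamma (a + k))⁻¹‖ * k ! with hK
  have hKmem : ∀ k ∈ range (n0 + 1), ‖(Complex.Gamma (a + k))⁻¹‖ * k ! ≤ K := by
    intro k hk
    exact Finset.single_le_sum (f := fun k : ℕ => ‖(Complex.Gamma (a + (k : ℂ)))⁻¹‖ * (k ! : ℝ))
      (fun i _ => by positivity) hk
  refine ⟨K, by positivity, ?_⟩
  intro n
  rcases le_or_gt n n0 with h | h
  · calc ‖(Complex.Gamma (a + n))⁻¹‖ * n ! ≤ K :=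
        hKmem n (mem_range.mpr (Nat.lt_succ_of_le h))
      _ ≤ K * 2 ^ n :=
        le_mul_of_one_le_right (by positivity) (one_le_pow₀ (by norm_num))
  · set p : ℕ := n - n0 with hp
    have hnp : n = n0 + p := by omega
    have haux := inv_gamma_up_aux a n0 hn0 p
    have e : a + n0 + p = a + n := by rw [hnp]; push_cast; ring
    rw [e] at haux
    have hfact : (n ! : ℝ) = n.choose n0 * n0 ! * p ! := by
      rw [hp, ← Nat.choose_mul_factorial_mul_factorial h.le]; push_cast; ring
    have hn0K : ‖(Complex.Gamma (a + n0))⁻¹‖ * n0 ! ≤ K :=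
      hKmem n0 (mem_range.mpr (Nat.lt_succ_self _))
    have hch : (n.choose n0 : ℝ) ≤ 2 ^ n := by
      exact_mod_cast Nat.cast_le.mpr (by
        calc n.choose n0 ≤ ∑ m ∈ range (n + 1), n.choose m :=
            Finset.single_le_sum (fun i _ => Nat.zero_le _) (mem_range.mpr (by omega))
          _ = 2 ^ n := Nat.sum_range_choose n)
    calc ‖(Complex.Gamma (a + n))⁻¹‖ * n !
        = (n.choose n0 : ℝ) * n0 ! * (‖(Complex.Gamma (a + n))⁻¹‖ * p !) := by
          rw [hfact]; ring
      _ ≤ (n.choose n0 : ℝ) * n0 ! * ‖(Complex.Gamma (a + n0))⁻¹‖ := by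
          apply mul_le_mul_of_nonneg_left haux (by positivity)
      _ = (n.choose n0 : ℝ) * (‖(Complex.Gamma (a + n0))⁻¹‖ * n0 !) := by ring
      _ ≤ 2 ^ n * K := by
          apply mul_le_mul hch hn0K (by positivity) (by positivity)
      _ = K * 2 ^ n := mul_comm _ _

private lemma inv_gamma_int_bound (a : ℂ) : ∃ K B : ℝ, 1 ≤ K ∧ 1 ≤ B ∧ ∀ m : ℤ,
    ‖(Complex.Gamma (a + m))⁻¹‖ ≤ K * B ^ m.natAbs *
      (if 0 ≤ m then (((m.toNat)! : ℝ))⁻¹ else (((-m).toNat)! : ℝ)) := by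
  obtain ⟨K1, hK1, hup⟩ := inv_gamma_up a
  refine ⟨max 1 (max K1 ‖(Complex.Gamma a)⁻¹‖), max 2 (1 + ‖a‖),
    le_max_left _ _, le_trans (by norm_num) (le_max_left _ _), ?_⟩
  set K : ℝ := max 1 (max K1 ‖(Complex.Gamma a)⁻¹‖) with hKdef
  set B : ℝ := max 2 (1 + ‖a‖) with hBdef
  have hK0 : (0:ℝ) < K := lt_of_lt_of_le one_pos (le_max_left _ _)
  have hB0 : (0:ℝ) < B := lt_of_lt_of_le two_pos (le_max_left _ _)
  intro m
  rcases le_or_gt 0 m with hm | hm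
  · rw [if_pos hm]
    lift m to ℕ using hm with n
    have hfp : (0:ℝ) < (n ! : ℝ) := by exact_mod_cast Nat.factorial_pos n
    have h1 : ‖(Complex.Gamma (a + (n:ℤ)))⁻¹‖ * n ! ≤ K1 * 2 ^ n := by
      have := hup n
      simpa using this
    have h2 : ‖(Complex.Gamma (a + (n:ℤ)))⁻¹‖ ≤ (K1 * 2 ^ n) * ((n !:ℝ))⁻¹ := by
      rw [← le_div_iff₀ hfp] at h1
      simpa [div_eq_mul_inv] using h1
    refine h2.trans ?_
    have : K1 * 2 ^ n ≤ K * B ^ (n : ℤ).natAbs := by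
      have hK1K : K1 ≤ K := le_trans (le_max_left _ _) (le_max_right _ _)
      have h2B : (2:ℝ) ≤ B := le_max_left _ _
      simp only [Int.natAbs_natCast]
      apply mul_le_mul hK1K (pow_le_pow_left₀ (by norm_num) h2B n) (by positivity) hK0.le
    have htn : ((n:ℤ).toNat) = n := by simp
    rw [htn]
    exact mul_le_mul_of_nonneg_right this (by positivity)
  · rw [if_neg (not_le.mpr hm)]
    set n : ℕ := (-m).toNat with hn
    have hmn : (m : ℂ) = -(n : ℂ) := by
      have : ((-m).toNat : ℤ) = -m := Int.toNat_of_nonneg (by omega)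
      push_cast [hn]
      exact_mod_cast (by push_cast [this]; ring : (m:ℂ) = -((((-m).toNat : ℤ)):ℂ))
    have e : a + (m : ℂ) = a - n := by rw [hmn]; ring
    rw [e]
    refine (inv_gamma_down a n).trans ?_
    have hGa : ‖(Complex.Gamma a)⁻¹‖ ≤ K :=
      le_trans (le_max_right _ _) (le_max_right _ _)
    have hBa : (1 + ‖a‖) ^ n ≤ B ^ n := by
      apply pow_le_pow_left₀ (by positivity) (le_max_right _ _)
    have hNA : m.natAbs = n := by omega
    rw [hNA]
    calc ‖(Complex.Gamma a)⁻¹‖ * ((1 + ‖a‖) ^ n * n !)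
        ≤ K * (B ^ n * n !) := by
          apply mul_le_mul hGa (by apply mul_le_mul_of_nonneg_right hBa (by positivity))
            (by positivity) hK0.le
      _ = K * B ^ n * n ! := by ring

private lemma W_prod_le (N : ℕ) (m : Fin N → ℤ) (hm : ∑ i, m i = 0) :
    ∏ i, (if 0 ≤ m i then ((((m i).toNat)! : ℝ))⁻¹ else ((((-(m i)).toNat)! : ℝ)))
      ≤ 2 ^ (N * ∑ i, (m i).natAbs) := by
  classical
  set s : Finset (Fin N) := univ.filter (fun i => 0 ≤ m i) with hs
  set t : Finset (Fin N) := univ.filter (fun i => ¬ 0 ≤ m i) with ht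
  have hsplit : ∏ i, (if 0 ≤ m i then ((((m i).toNat)! : ℝ))⁻¹ else ((((-(m i)).toNat)! : ℝ)))
      = (∏ i ∈ s, ((((m i).toNat)! : ℝ))⁻¹) * (∏ i ∈ t, ((((-(m i)).toNat)! : ℝ))) := by
    rw [← Finset.prod_filter_mul_prod_filter_not univ (fun i => 0 ≤ m i)]
    congr 1
    · exact Finset.prod_congr rfl (fun i hi => by rw [if_pos (mem_filter.mp hi).2])
    · exact Finset.prod_congr rfl (fun i hi => by rw [if_neg (mem_filter.mp hi).2])
  set P : ℕ := ∑ i ∈ s, (m i).toNat with hP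
  set Q : ℕ := ∑ i ∈ t, (-(m i)).toNat with hQ
  have hPQ : P = Q := by
    have h1 : ∑ i ∈ s, m i = (P : ℤ) := by
      rw [hP]; push_cast
      exact Finset.sum_congr rfl (fun i hi =>
        (Int.toNat_of_nonneg (mem_filter.mp hi).2).symm)
    have h2 : ∑ i ∈ t, m i = -(Q : ℤ) := by
      rw [hQ]; push_cast
      rw [← Finset.sum_neg_distrib]
      exact Finset.sum_congr rfl (fun i hi => by
        have h := (mem_filter.mp hi).2
        omega)
    have h3 : ∑ i ∈ s, m i + ∑ i ∈ t, m i = 0 := by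
      rw [Finset.sum_filter_add_sum_filter_not univ (fun i => 0 ≤ m i)]; exact hm
    omega
  have hnat : (∏ i ∈ t, ((-(m i)).toNat)!) ≤ 2 ^ (N * ∑ i, (m i).natAbs) * ∏ i ∈ s, ((m i).toNat)! := by
    calc (∏ i ∈ t, ((-(m i)).toNat)!) ≤ Q ! := my_prod_factorial_le t _
      _ = P ! := by rw [hPQ]
      _ ≤ 2 ^ (s.card * P) * ∏ i ∈ s, ((m i).toNat)! := my_factorial_sum_le s _
      _ ≤ 2 ^ (N * ∑ i, (m i).natAbs) * ∏ i ∈ s, ((m i).toNat)! := by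
          gcongr 2 ^ ?_ * _
          · exact one_le_two
          · apply Nat.mul_le_mul
            · exact le_trans (Finset.card_filter_le _ _) (by simp)
            · calc P ≤ ∑ i ∈ s, (m i).natAbs :=
                  Finset.sum_le_sum (fun i _ => by omega)
                _ ≤ ∑ i, (m i).natAbs :=
                  Finset.sum_le_sum_of_subset (Finset.filter_subset _ _)
  rw [hsplit]
  have hppos : (0:ℝ) < ∏ i ∈ s, ((((m i).toNat)! : ℝ)) := by positivity
  rw [Finset.prod_inv_distrib]
  rw [inv_mul_le_iff₀ hppos]
  calc (∏ i ∈ t, ((((-(m i)).toNat)! : ℝ)))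
      ≤ (2 : ℝ) ^ (N * ∑ i, (m i).natAbs) * ∏ i ∈ s, ((((m i).toNat)! : ℝ)) := by
        exact_mod_cast Nat.cast_le.mpr hnat
    _ = (∏ i ∈ s, ((((m i).toNat)! : ℝ))) * 2 ^ (N * ∑ i, (m i).natAbs) := mul_comm _ _

private lemma summable_pi_geometric : ∀ (r : ℕ) (q : Fin r → ℝ),
    (∀ j, 0 ≤ q j) → (∀ j, q j < 1) →
    Summable fun lam : Fin r → ℕ => ∏ j, q j ^ lam j := by
  intro r
  induction r with
  | zero =>
    intro q _ _
    exact Summable.of_finite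
  | succ r ih =>
    intro q hq0 hq1
    have h := Summable.mul_of_nonneg
      (summable_geometric_of_lt_one (hq0 0) (hq1 0))
      (ih (fun j => q j.succ) (fun j => hq0 _) (fun j => hq1 _))
      (fun n => pow_nonneg (hq0 0) _)
      (fun lam => Finset.prod_nonneg fun j _ => pow_nonneg (hq0 _) _)
    apply (Fin.consEquiv (fun _ : Fin (r + 1) => ℕ)).summable_iff.mp
    have : (fun lam : Fin (r + 1) → ℕ => ∏ j, q j ^ lam j) ∘
        (Fin.consEquiv (fun _ : Fin (r + 1) => ℕ))
        = fun p : ℕ × (Fin r → ℕ) => q 0 ^ p.1 * ∏ j, q j.succ ^ p.2 j := by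
      funext p
      simp only [Function.comp_apply, Fin.consEquiv_apply]
      rw [Fin.prod_univ_succ]
      simp [Fin.cons_zero, Fin.cons_succ]
    rw [this]
    exact h

/-- Convergence of Γ-series: if every column of the integer matrix `C` sums to zero,
then for all `x` of sufficiently small absolute value the family
`λ ↦ x^λ · ∏ᵢ Γ(aᵢ + (Cλ)ᵢ)⁻¹` (λ ∈ ℕ^r) is absolutely summable. -/
theorem gamma_series_abs_convergence (N r : ℕ) (hN : 1 ≤ N) (hr : 1 ≤ r)
    (C : Matrix (Fin N) (Fin r) ℤ) (hC : ∀ j, ∑ i, C i j = 0) (a : Fin N → ℂ) :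
    ∃ ε : ℝ, 0 < ε ∧ ∀ x : Fin r → ℂ, (∀ j, ‖x j‖ < ε) →
      Summable fun lam : Fin r → ℕ =>
        ‖(∏ j, x j ^ lam j) *
          ∏ i, (Complex.Gamma (a i + ((∑ j, C i j * (lam j : ℤ) : ℤ) : ℂ)))⁻¹‖ := by
  classical
  choose K B hK hB hbound using fun i => inv_gamma_int_bound (a i)
  set c : Fin r → ℕ := fun j => ∑ i, (C i j).natAbs with hc
  set D : Fin r → ℝ := fun j => (∏ i, B i ^ (C i j).natAbs) * 2 ^ (N * c j) with hD
  have hD1 : ∀ j, 1 ≤ D j := by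
    intro j
    have h1 : (1:ℝ) ≤ ∏ i, B i ^ (C i j).natAbs := by
      calc (1:ℝ) = ∏ _i : Fin N, 1 := by simp
        _ ≤ ∏ i, B i ^ (C i j).natAbs :=
          Finset.prod_le_prod (fun i _ => one_pos.le) (fun i _ => one_le_pow₀ (hB i))
    have h2 : (1:ℝ) ≤ 2 ^ (N * c j) := one_le_pow₀ (by norm_num)
    calc (1:ℝ) = 1 * 1 := by ring
      _ ≤ _ := mul_le_mul h1 h2 (by norm_num) (by linarith)
  set Dm : ℝ := (∑ j, D j) + 1 with hDm
  have hDmpos : 0 < Dm := by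
    have : (0:ℝ) ≤ ∑ j, D j := Finset.sum_nonneg (fun j _ => by linarith [hD1 j])
    rw [hDm]; linarith
  have hDle : ∀ j, D j ≤ Dm := by
    intro j
    rw [hDm]
    have : D j ≤ ∑ j', D j' :=
      Finset.single_le_sum (f := D) (fun j' _ => by linarith [hD1 j']) (mem_univ j)
    linarith
  refine ⟨Dm⁻¹, by positivity, ?_⟩
  intro x hx
  set q : Fin r → ℝ := fun j => ‖x j‖ * D j with hq
  have hq0 : ∀ j, 0 ≤ q j := fun j => mul_nonneg (norm_nonneg _) (by linarith [hD1 j])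
  have hq1 : ∀ j, q j < 1 := by
    intro j
    calc ‖x j‖ * D j < Dm⁻¹ * D j := by
          apply mul_lt_mul_of_pos_right (hx j) (by linarith [hD1 j])
      _ ≤ Dm⁻¹ * Dm := by
          apply mul_le_mul_of_nonneg_left (hDle j) (by positivity)
      _ = 1 := inv_mul_cancel₀ hDmpos.ne'
  have hsum := (summable_pi_geometric r q hq0 hq1).mul_left (∏ i, K i)
  apply Summable.of_nonneg_of_le (fun lam => norm_nonneg _) ?_ hsum
  intro lam
  set m : Fin N → ℤ := fun i => ∑ j, C i j * (lam j : ℤ) with hm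
  have hm0 : ∑ i, m i = 0 := by
    rw [hm]
    rw [Finset.sum_comm]
    simp only [← Finset.sum_mul]
    simp [hC]
  have hmabs : ∀ i, (m i).natAbs ≤ ∑ j, (C i j).natAbs * lam j := by
    intro i
    calc (m i).natAbs ≤ ∑ j, (C i j * (lam j : ℤ)).natAbs := nat_abs_sum_le _ _
      _ = ∑ j, (C i j).natAbs * lam j := by
          apply Finset.sum_congr rfl
          intro j _
          rw [Int.natAbs_mul, Int.natAbs_natCast]
  -- norm splits
  rw [norm_mul]
  have hx_norm : ‖∏ j, x j ^ lam j‖ = ∏ j, ‖x j‖ ^ lam j := by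
    rw [norm_prod]; exact Finset.prod_congr rfl (fun j _ => norm_pow _ _)
  have hG_norm : ‖∏ i, (Complex.Gamma (a i + ((m i : ℤ) : ℂ)))⁻¹‖
      = ∏ i, ‖(Complex.Gamma (a i + ((m i : ℤ) : ℂ)))⁻¹‖ := norm_prod _ _
  rw [hx_norm, hG_norm]
  -- bound the Gamma product
  have step1 : ∏ i, ‖(Complex.Gamma (a i + ((m i : ℤ) : ℂ)))⁻¹‖
      ≤ ∏ i, (K i * B i ^ (m i).natAbs *
        (if 0 ≤ m i then ((((m i).toNat)! : ℝ))⁻¹ else ((((-(m i)).toNat)! : ℝ)))) := by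
    apply Finset.prod_le_prod (fun i _ => norm_nonneg _) (fun i _ => hbound i (m i))
  have step2 : ∏ i, (K i * B i ^ (m i).natAbs *
        (if 0 ≤ m i then ((((m i).toNat)! : ℝ))⁻¹ else ((((-(m i)).toNat)! : ℝ))))
      = (∏ i, K i) * (∏ i, B i ^ (m i).natAbs) *
        (∏ i, (if 0 ≤ m i then ((((m i).toNat)! : ℝ))⁻¹ else ((((-(m i)).toNat)! : ℝ)))) := by
    rw [Finset.prod_mul_distrib, Finset.prod_mul_distrib]
  have hW : (∏ i, (if 0 ≤ m i then ((((m i).toNat)! : ℝ))⁻¹ else ((((-(m i)).toNat)! : ℝ))))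
      ≤ 2 ^ (N * ∑ i, (m i).natAbs) := W_prod_le N m hm0
  have hWpos : (0:ℝ) ≤ ∏ i, (if 0 ≤ m i then ((((m i).toNat)! : ℝ))⁻¹ else ((((-(m i)).toNat)! : ℝ))) := by
    apply Finset.prod_nonneg
    intro i _
    split <;> positivity
  -- exponent bounds
  have hexp : N * ∑ i, (m i).natAbs ≤ ∑ j, N * c j * lam j := by
    calc N * ∑ i, (m i).natAbs ≤ N * ∑ i, ∑ j, (C i j).natAbs * lam j := by
          apply Nat.mul_le_mul_left
          exact Finset.sum_le_sum (fun i _ => hmabs i)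
      _ = ∑ j, N * ∑ i, (C i j).natAbs * lam j := by rw [Finset.sum_comm, Finset.mul_sum]
      _ = ∑ j, N * c j * lam j := by
          apply Finset.sum_congr rfl
          intro j _
          simp only [hc, ← Finset.sum_mul]
          ring
  have h2exp : (2:ℝ) ^ (N * ∑ i, (m i).natAbs) ≤ ∏ j, ((2:ℝ) ^ (N * c j)) ^ lam j := by
    calc (2:ℝ) ^ (N * ∑ i, (m i).natAbs) ≤ (2:ℝ) ^ (∑ j, N * c j * lam j) :=
        pow_le_pow_right₀ one_le_two hexp
      _ = ∏ j, ((2:ℝ) ^ (N * c j)) ^ lam j := by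
          rw [← Finset.prod_pow_eq_pow_sum]
          exact Finset.prod_congr rfl (fun j _ => by rw [← pow_mul])
  have hBbd : (∏ i, B i ^ (m i).natAbs) ≤ ∏ j, (∏ i, B i ^ (C i j).natAbs) ^ lam j := by
    calc (∏ i, B i ^ (m i).natAbs) ≤ ∏ i, B i ^ (∑ j, (C i j).natAbs * lam j) := by
          apply Finset.prod_le_prod (fun i _ => pow_nonneg (by linarith [hB i]) _)
          intro i _
          exact pow_le_pow_right₀ (hB i) (hmabs i)
      _ = ∏ i, ∏ j, (B i ^ (C i j).natAbs) ^ lam j := by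
          apply Finset.prod_congr rfl
          intro i _
          rw [← Finset.prod_pow_eq_pow_sum]
          exact Finset.prod_congr rfl (fun j _ => by rw [← pow_mul])
      _ = ∏ j, ∏ i, (B i ^ (C i j).natAbs) ^ lam j := Finset.prod_comm
      _ = ∏ j, (∏ i, B i ^ (C i j).natAbs) ^ lam j :=
          Finset.prod_congr rfl (fun j _ => Finset.prod_pow _ _ _)
  -- nonnegativity helpers
  have hK0 : (0:ℝ) ≤ ∏ i, K i := Finset.prod_nonneg (fun i _ => by linarith [hK i])
  have hB0 : (0:ℝ) ≤ ∏ i, B i ^ (m i).natAbs :=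
    Finset.prod_nonneg (fun i _ => pow_nonneg (by linarith [hB i]) _)
  have hx0 : (0:ℝ) ≤ ∏ j, ‖x j‖ ^ lam j :=
    Finset.prod_nonneg (fun j _ => pow_nonneg (norm_nonneg _) _)
  have hP0 : (0:ℝ) ≤ ∏ j, (∏ i, B i ^ (C i j).natAbs) ^ lam j :=
    Finset.prod_nonneg (fun j _ => pow_nonneg
      (Finset.prod_nonneg (fun i _ => pow_nonneg (by linarith [hB i]) _)) _)
  have hT0 : (0:ℝ) ≤ ∏ j, ((2:ℝ) ^ (N * c j)) ^ lam j :=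
    Finset.prod_nonneg (fun j _ => by positivity)
  have hqprod : ∏ j, q j ^ lam j = (∏ j, ‖x j‖ ^ lam j) *
      ((∏ j, (∏ i, B i ^ (C i j).natAbs) ^ lam j) * (∏ j, ((2:ℝ) ^ (N * c j)) ^ lam j)) := by
    rw [← Finset.prod_mul_distrib, ← Finset.prod_mul_distrib]
    apply Finset.prod_congr rfl
    intro j _
    simp only [hq, hD]
    rw [mul_pow, mul_pow]
  calc (∏ j, ‖x j‖ ^ lam j) * ∏ i, ‖(Complex.Gamma (a i + ((m i : ℤ) : ℂ)))⁻¹‖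
      ≤ (∏ j, ‖x j‖ ^ lam j) * ((∏ i, K i) * (∏ i, B i ^ (m i).natAbs) *
          (∏ i, (if 0 ≤ m i then ((((m i).toNat)! : ℝ))⁻¹ else ((((-(m i)).toNat)! : ℝ))))) :=
        mul_le_mul_of_nonneg_left (step1.trans (le_of_eq step2)) hx0
    _ ≤ (∏ j, ‖x j‖ ^ lam j) * ((∏ i, K i) * (∏ j, (∏ i, B i ^ (C i j).natAbs) ^ lam j) *
          (∏ j, ((2:ℝ) ^ (N * c j)) ^ lam j)) := by
        apply mul_le_mul_of_nonneg_left ?_ hx0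
        apply mul_le_mul
        · exact mul_le_mul_of_nonneg_left hBbd hK0
        · exact hW.trans h2exp
        · exact hWpos
        · exact mul_nonneg hK0 hP0
    _ = (∏ i, K i) * ∏ j, q j ^ lam j := by
        rw [hqprod]; ring
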